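/- There is an absolute constant C such that for every positive integer n and every complex number z, the spherical derivative of f_n(z) = ∏_{k=−n}^{n} tanh(z + 2k) satisfies f_n^#(z) = |f_n'(z)|/(1 + |f_n(z)|²) ≤ C. -/

import Mathlib

open Complex Finset

lemma sinh_decomp (u : ℂ) :
    Complex.sinh u = ((Real.sinh u.re * Real.cos u.im : ℝ) : ℂ)
      + ((Real.cosh u.re * Real.sin u.im : ℝ) : ℂ) * I := by
  conv_lhs => rw [← Complex.re_add_im u, Complex.sinh_add, Complex.sinh_mul_I, Complex.cosh_mul_I]
  rw [← Complex.ofReal_sinh, ← Complex.ofReal_cosh, ← Complex.ofReal_sin, ← Complex.ofReal_cos]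
  push_cast; ring

lemma cosh_decomp (u : ℂ) :
    Complex.cosh u = ((Real.cosh u.re * Real.cos u.im : ℝ) : ℂ)
      + ((Real.sinh u.re * Real.sin u.im : ℝ) : ℂ) * I := by
  conv_lhs => rw [← Complex.re_add_im u, Complex.cosh_add, Complex.sinh_mul_I, Complex.cosh_mul_I]
  rw [← Complex.ofReal_sinh, ← Complex.ofReal_cosh, ← Complex.ofReal_sin, ← Complex.ofReal_cos]
  push_cast; ring

lemma sq_abs_sinh (u : ℂ) :
    ‖Complex.sinh u‖ ^ 2 = Real.sinh u.re ^ 2 + Real.sin u.im ^ 2 := by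
  rw [sinh_decomp, Complex.sq_norm, Complex.normSq_add_mul_I]
  have := Real.sin_sq_add_cos_sq u.im
  have := Real.cosh_sq u.re
  nlinarith

lemma sq_abs_cosh (u : ℂ) :
    ‖Complex.cosh u‖ ^ 2 = Real.sinh u.re ^ 2 + Real.cos u.im ^ 2 := by
  rw [cosh_decomp, Complex.sq_norm, Complex.normSq_add_mul_I]
  have := Real.sin_sq_add_cos_sq u.im
  have := Real.cosh_sq u.re
  nlinarith

lemma sinh_re_ne_zero {u : ℂ} (h : u.re ≠ 0) : Real.sinh u.re ≠ 0 := by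
  rwa [ne_eq, Real.sinh_eq_zero]

lemma cosh_ne_zero_of_re {u : ℂ} (h : u.re ≠ 0) : Complex.cosh u ≠ 0 := by
  intro h0
  have h1 := sq_abs_cosh u
  rw [h0] at h1; simp at h1
  have h2 := sinh_re_ne_zero h
  nlinarith [sq_nonneg (Real.cos u.im), pow_two_pos_of_ne_zero h2]

lemma sinh_ne_zero_of_re {u : ℂ} (h : u.re ≠ 0) : Complex.sinh u ≠ 0 := by
  intro h0
  have h1 := sq_abs_sinh u
  rw [h0] at h1; simp at h1
  have h2 := sinh_re_ne_zero h
  nlinarith [sq_nonneg (Real.sin u.im), pow_two_pos_of_ne_zero h2]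

lemma tanh_ne_zero_of_re {u : ℂ} (h : u.re ≠ 0) : Complex.tanh u ≠ 0 := by
  rw [Complex.tanh_eq_sinh_div_cosh]
  exact div_ne_zero (sinh_ne_zero_of_re h) (cosh_ne_zero_of_re h)

lemma sq_abs_tanh_eq {u : ℂ} :
    ‖Complex.tanh u‖ ^ 2
      = (Real.sinh u.re ^ 2 + Real.sin u.im ^ 2) / (Real.sinh u.re ^ 2 + Real.cos u.im ^ 2) := by
  rw [Complex.tanh_eq_sinh_div_cosh, norm_div, div_pow, sq_abs_sinh, sq_abs_cosh]

lemma sq_abs_tanh_le {u : ℂ} (h : u.re ≠ 0) :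
    ‖Complex.tanh u‖ ^ 2 ≤ 1 + 1 / Real.sinh u.re ^ 2 := by
  rw [sq_abs_tanh_eq]
  have hs := pow_two_pos_of_ne_zero (sinh_re_ne_zero h)
  have hd : (0:ℝ) < Real.sinh u.re ^ 2 + Real.cos u.im ^ 2 := by positivity
  rw [div_le_iff₀ hd]
  have h1 := Real.sin_sq_add_cos_sq u.im
  have h2 : (1:ℝ) / Real.sinh u.re ^ 2 = (Real.sinh u.re ^ 2)⁻¹ := one_div _
  rw [h2]
  have h3 : (Real.sinh u.re ^ 2)⁻¹ * Real.sinh u.re ^ 2 = 1 := inv_mul_cancel₀ (ne_of_gt hs)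
  nlinarith [sq_nonneg (Real.cos u.im), sq_nonneg (Real.sin u.im),
    mul_pos (inv_pos.mpr hs) hs]

lemma le_sq_abs_tanh {u : ℂ} (h : u.re ≠ 0) :
    1 - 1 / Real.sinh u.re ^ 2 ≤ ‖Complex.tanh u‖ ^ 2 := by
  rw [sq_abs_tanh_eq]
  have hs := pow_two_pos_of_ne_zero (sinh_re_ne_zero h)
  have hd : (0:ℝ) < Real.sinh u.re ^ 2 + Real.cos u.im ^ 2 := by positivity
  rw [le_div_iff₀ hd]
  have h1 := Real.sin_sq_add_cos_sq u.im
  have h3 : (1 / Real.sinh u.re ^ 2) * Real.sinh u.re ^ 2 = 1 := by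
    field_simp
  nlinarith [sq_nonneg (Real.cos u.im), sq_nonneg (Real.sin u.im),
    mul_nonneg (le_of_lt (div_pos one_pos hs)) (sq_nonneg (Real.cos u.im))]

lemma hasDerivAt_tanh_shift (c z : ℂ) (h : Complex.cosh (z + c) ≠ 0) :
    HasDerivAt (fun w => Complex.tanh (w + c)) (1 / Complex.cosh (z + c) ^ 2) z := by
  have hid : HasDerivAt (fun w : ℂ => w + c) 1 z := (hasDerivAt_id z).add_const c
  have hs : HasDerivAt (fun w : ℂ => Complex.sinh (w + c)) (Complex.cosh (z + c) * 1) z :=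
    HasDerivAt.csinh hid
  have hc : HasDerivAt (fun w : ℂ => Complex.cosh (w + c)) (Complex.sinh (z + c) * 1) z :=
    HasDerivAt.ccosh hid
  have hdiv := hs.div hc h
  have heq : ((fun w : ℂ => Complex.sinh (w + c)) / (fun w : ℂ => Complex.cosh (w + c)))
      = fun w : ℂ => Complex.tanh (w + c) := by
    funext w; rw [Pi.div_apply, Complex.tanh_eq_sinh_div_cosh]
  rw [heq] at hdiv
  refine hdiv.congr_deriv ?_
  have := Complex.cosh_sq_sub_sinh_sq (z + c)
  rw [div_left_inj' (pow_ne_zero 2 h)]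
  linear_combination this

lemma abs_sech_sq_le {u : ℂ} (h : u.re ≠ 0) :
    ‖1 / Complex.cosh u ^ 2‖ ≤ 1 / Real.sinh u.re ^ 2 := by
  rw [norm_div, norm_one, norm_pow]
  have hs := pow_two_pos_of_ne_zero (sinh_re_ne_zero h)
  have h1 : Real.sinh u.re ^ 2 ≤ ‖Complex.cosh u‖ ^ 2 := by
    rw [sq_abs_cosh]; nlinarith [sq_nonneg (Real.cos u.im)]
  exact one_div_le_one_div_of_le hs h1

lemma sum_pow_le (T : Finset ℕ) (r : ℝ) (h0 : 0 ≤ r) (h1 : r < 1) (hT : 0 ∉ T) :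
    ∑ i ∈ T, r ^ i ≤ r / (1 - r) := by
  obtain ⟨N, hN⟩ := T.exists_nat_subset_range
  rcases Nat.eq_zero_or_pos N with hN0 | hN0
  · subst hN0
    have : T = ∅ := Finset.subset_empty.mp (by simpa using hN)
    subst this
    simp
    exact div_nonneg h0 (by linarith)
  have hsub : T ⊆ (Finset.range N).erase 0 := fun i hi =>
    Finset.mem_erase.mpr ⟨fun h => hT (h ▸ hi), hN hi⟩
  have hr1 : (1:ℝ) - r > 0 := by linarith
  calc ∑ i ∈ T, r ^ i ≤ ∑ i ∈ (Finset.range N).erase 0, r ^ i :=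
        Finset.sum_le_sum_of_subset_of_nonneg hsub (fun i _ _ => pow_nonneg h0 i)
    _ = (∑ i ∈ Finset.range N, r ^ i) - r ^ 0 :=
        Finset.sum_erase_eq_sub (Finset.mem_range.mpr hN0)
    _ = (1 - r ^ N) / (1 - r) - 1 := by
        rw [geom_sum_eq (ne_of_lt h1)]
        rw [pow_zero]
        congr 1
        rw [div_eq_div_iff (by intro hh; linarith [sub_eq_zero.mp hh]) (ne_of_gt hr1)]
        ring
    _ ≤ 1 / (1 - r) - 1 := by
        have h2 : (1 - r ^ N) ≤ 1 := by nlinarith [pow_nonneg h0 N]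
        have h3 := (div_le_div_iff_of_pos_right hr1).mpr h2
        linarith
    _ = r / (1 - r) := by field_simp; ring

lemma sum_int_decay (s : Finset ℤ) (k₀ : ℤ) (r : ℝ) (h0 : 0 ≤ r) (h1 : r < 1)
    (hk : k₀ ∉ s) : ∑ j ∈ s, r ^ (j - k₀).natAbs ≤ 2 * (r / (1 - r)) := by
  classical
  rw [← Finset.sum_filter_add_sum_filter_not s (k₀ < ·)]
  have key : ∀ t : Finset ℤ, (∀ x ∈ t, ∀ y ∈ t, (x - k₀).natAbs = (y - k₀).natAbs → x = y) →
      (∀ x ∈ t, x ≠ k₀) → ∑ j ∈ t, r ^ (j - k₀).natAbs ≤ r / (1 - r) := by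
    intro t hinj hne
    rw [← Finset.sum_image (s := t) (g := fun j => (j - k₀).natAbs) (f := fun i => (r : ℝ) ^ i) hinj]
    apply sum_pow_le _ r h0 h1
    intro h0mem
    obtain ⟨x, hx, hx0⟩ := Finset.mem_image.mp h0mem
    exact hne x hx (by omega)
  have h1' := key (s.filter (k₀ < ·)) (by
    intro x hx y hy hxy
    have hx' := (Finset.mem_filter.mp hx).2
    have hy' := (Finset.mem_filter.mp hy).2
    omega) (by intro x hx; have := (Finset.mem_filter.mp hx).2; omega)
  have h2' := key (s.filter (fun j => ¬ k₀ < j)) (by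
    intro x hx y hy hxy
    have hx1 := (Finset.mem_filter.mp hx).1
    have hx' := (Finset.mem_filter.mp hx).2
    have hy1 := (Finset.mem_filter.mp hy).1
    have hy' := (Finset.mem_filter.mp hy).2
    have : x ≠ k₀ := fun h => hk (h ▸ hx1)
    have : y ≠ k₀ := fun h => hk (h ▸ hy1)
    omega) (by intro x hx; intro h; exact hk (h ▸ (Finset.mem_filter.mp hx).1))
  linarith

lemma sinh_lower {y₀ y : ℝ} (h0 : 0 < y₀) (h : y₀ ≤ y) :
    (1 - Real.exp (-(2*y₀))) / 2 * Real.exp y ≤ Real.sinh y := by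
  rw [Real.sinh_eq]
  have h1 : Real.exp (-y) = Real.exp y * Real.exp (-(2*y)) := by
    rw [← Real.exp_add]; ring_nf
  have h2 : Real.exp (-(2*y)) ≤ Real.exp (-(2*y₀)) := Real.exp_le_exp.mpr (by linarith)
  have h3 : 0 < Real.exp y := Real.exp_pos y
  rw [h1]
  nlinarith

lemma inv_sinh_sq_le {y₀ y : ℝ} (h0 : 0 < y₀) (h : y₀ ≤ y) :
    1 / Real.sinh y ^ 2 ≤ 4 / (1 - Real.exp (-(2*y₀))) ^ 2 * Real.exp (-(2*y)) := by
  set L := (1 - Real.exp (-(2*y₀))) / 2 with hL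
  have hLpos : 0 < L := by
    have : Real.exp (-(2*y₀)) < 1 := Real.exp_lt_one_iff.mpr (by linarith)
    rw [hL]; linarith
  have h1 : L * Real.exp y ≤ Real.sinh y := sinh_lower h0 h
  have hey : 0 < Real.exp y := Real.exp_pos y
  have h2 : 0 < Real.sinh y := lt_of_lt_of_le (by positivity) h1
  have h3 : (L * Real.exp y) ^ 2 ≤ Real.sinh y ^ 2 := by
    have hLE : 0 < L * Real.exp y := by positivity
    nlinarith
  have h4 : 1 / Real.sinh y ^ 2 ≤ 1 / (L * Real.exp y) ^ 2 :=
    one_div_le_one_div_of_le (by positivity) h3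
  have h5 : Real.exp (-(2*y)) = 1 / (Real.exp y) ^ 2 := by
    rw [Real.exp_neg]
    congr 1
    rw [← Real.exp_nat_mul]
    norm_num
  have h6 : 1 / (L * Real.exp y) ^ 2 = (1 / L ^ 2) * (1 / (Real.exp y) ^ 2) := by
    rw [mul_pow]
    rw [one_div, mul_inv, ← one_div, ← one_div, one_div (Real.exp y ^ 2)]
  have h7 : 4 / (1 - Real.exp (-(2*y₀))) ^ 2 = 1 / L ^ 2 := by
    rw [hL]; rw [div_pow]; rw [one_div_div]
    congr 1; norm_num
  rw [h7, h5]
  calc 1 / Real.sinh y ^ 2 ≤ 1 / (L * Real.exp y) ^ 2 := h4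
    _ = 1 / L ^ 2 * (1 / Real.exp y ^ 2) := h6

lemma sinh_sq_abs (x : ℝ) : Real.sinh |x| ^ 2 = Real.sinh x ^ 2 := by
  rcases abs_cases x with ⟨h, _⟩ | ⟨h, _⟩ <;> rw [h] <;> simp [Real.sinh_neg]

lemma one_sub_sum_le_prod {ι : Type*} [DecidableEq ι] (t : Finset ι) (f : ι → ℝ)
    (h0 : ∀ i ∈ t, 0 ≤ f i) (h1 : ∀ i ∈ t, f i ≤ 1) :
    1 - ∑ i ∈ t, f i ≤ ∏ i ∈ t, (1 - f i) := by
  induction t using Finset.induction_on with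
  | empty => simp
  | @insert a t ha ih =>
    rw [Finset.sum_insert ha, Finset.prod_insert ha]
    have ih' := ih (fun i hi => h0 i (Finset.mem_insert_of_mem hi))
      (fun i hi => h1 i (Finset.mem_insert_of_mem hi))
    have ha0 := h0 a (Finset.mem_insert_self a t)
    have ha1 := h1 a (Finset.mem_insert_self a t)
    have hsum : 0 ≤ ∑ i ∈ t, f i := Finset.sum_nonneg (fun i hi => h0 i (Finset.mem_insert_of_mem hi))
    nlinarith

lemma sum_inv_sinh_decay (t : Finset ℤ) (k₀ : ℤ) (hk : k₀ ∉ t) (x : ℤ → ℝ) (y₀ cc : ℝ)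
    (h0 : 0 < y₀)
    (hy : ∀ j ∈ t, y₀ ≤ |x j|)
    (hfar : ∀ j ∈ t, 2*(((j - k₀).natAbs : ℕ) : ℝ) - cc ≤ |x j|) :
    ∑ j ∈ t, 1 / Real.sinh (x j) ^ 2 ≤
      4 / (1 - Real.exp (-(2*y₀))) ^ 2 * Real.exp (2*cc)
        * (2 * (Real.exp (-4) / (1 - Real.exp (-4)))) := by
  set A := 4 / (1 - Real.exp (-(2*y₀))) ^ 2 with hA
  have hexplt : Real.exp (-(2*y₀)) < 1 := Real.exp_lt_one_iff.mpr (by linarith)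
  have hApos : 0 < A := by
    rw [hA]
    have hb : (0:ℝ) < 1 - Real.exp (-(2*y₀)) := by linarith
    have : 0 < (1 - Real.exp (-(2*y₀))) ^ 2 := by positivity
    positivity
  have key : ∀ j ∈ t, 1 / Real.sinh (x j) ^ 2
      ≤ (A * Real.exp (2*cc)) * Real.exp (-4) ^ (j - k₀).natAbs := by
    intro j hj
    have h1 : 1 / Real.sinh (x j) ^ 2 ≤ A * Real.exp (-(2*|x j|)) := by
      rw [← sinh_sq_abs]
      exact inv_sinh_sq_le h0 (hy j hj)
    have h2 : Real.exp (-(2*|x j|)) ≤ Real.exp (2*cc) * Real.exp (-4) ^ (j - k₀).natAbs := by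
      have h3 : Real.exp (-4) ^ (j - k₀).natAbs
          = Real.exp ((((j - k₀).natAbs : ℕ) : ℝ) * (-4)) := by
        rw [Real.exp_nat_mul]
      rw [h3, ← Real.exp_add]
      apply Real.exp_le_exp.mpr
      have := hfar j hj
      linarith
    calc 1 / Real.sinh (x j) ^ 2 ≤ A * Real.exp (-(2*|x j|)) := h1
      _ ≤ A * (Real.exp (2*cc) * Real.exp (-4) ^ (j - k₀).natAbs) :=
          mul_le_mul_of_nonneg_left h2 (le_of_lt hApos)
      _ = (A * Real.exp (2*cc)) * Real.exp (-4) ^ (j - k₀).natAbs := by ring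
  calc ∑ j ∈ t, 1 / Real.sinh (x j) ^ 2
      ≤ ∑ j ∈ t, (A * Real.exp (2*cc)) * Real.exp (-4) ^ (j - k₀).natAbs :=
        Finset.sum_le_sum key
    _ = (A * Real.exp (2*cc)) * ∑ j ∈ t, Real.exp (-4) ^ (j - k₀).natAbs := by
        rw [Finset.mul_sum]
    _ ≤ (A * Real.exp (2*cc)) * (2 * (Real.exp (-4) / (1 - Real.exp (-4)))) := by
        apply mul_le_mul_of_nonneg_left _ (by positivity)
        exact sum_int_decay t k₀ _ (le_of_lt (Real.exp_pos _))
          (Real.exp_lt_one_iff.mpr (by norm_num)) hk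
    _ = A * Real.exp (2*cc) * (2 * (Real.exp (-4) / (1 - Real.exp (-4)))) := by ring

lemma exp_one_ub : Real.exp 1 ≤ 2.7182818286 := le_of_lt Real.exp_one_lt_d9
lemma exp_one_lb : 2.7182818283 ≤ Real.exp 1 := le_of_lt Real.exp_one_gt_d9

lemma exp_nat_eq (n : ℕ) : Real.exp (n : ℝ) = Real.exp 1 ^ n := by
  rw [← Real.exp_nat_mul]; norm_num

lemma exp4_eq : Real.exp (4:ℝ) = Real.exp 1 ^ 4 := by
  have h := exp_nat_eq 4
  norm_num at h
  convert h using 2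
  norm_num

lemma exp4_lb : (54 : ℝ) ≤ Real.exp 4 := by
  have h := exp_one_lb
  rw [exp4_eq]
  have h2 : (2.7182818283:ℝ)^2 ≤ Real.exp 1 ^ 2 := by nlinarith
  nlinarith

lemma exp4_ub : Real.exp 4 ≤ (55 : ℝ) := by
  have h := exp_one_ub
  have h0 := Real.exp_pos (1:ℝ)
  rw [exp4_eq]
  have h2 : Real.exp 1 ^ 2 ≤ (2.7182818286:ℝ)^2 := by nlinarith
  nlinarith

lemma expm4_ub : Real.exp (-4:ℝ) ≤ 0.0186 := by
  rw [Real.exp_neg]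
  have h1 : (Real.exp (4:ℝ))⁻¹ ≤ (54:ℝ)⁻¹ := by
    apply inv_anti₀ (by norm_num) exp4_lb
  calc (Real.exp (4:ℝ))⁻¹ ≤ (54:ℝ)⁻¹ := h1
    _ ≤ 0.0186 := by norm_num

lemma ratio4_ub : Real.exp (-4:ℝ) / (1 - Real.exp (-4:ℝ)) ≤ 0.019 := by
  have h1 := expm4_ub
  have h2 : 0 < Real.exp (-4:ℝ) := Real.exp_pos _
  rw [div_le_iff₀ (by linarith)]
  nlinarith

lemma one_div_cosh_sq {u : ℂ} (h : Complex.cosh u ≠ 0) :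
    1 / Complex.cosh u ^ 2 = 1 - Complex.tanh u ^ 2 := by
  rw [Complex.tanh_eq_sinh_div_cosh, div_pow]
  field_simp
  try linear_combination -Complex.cosh_sq_sub_sinh_sq u

lemma abs_one_div_cosh_sq_le {u : ℂ} (h : Complex.cosh u ≠ 0) :
    ‖1 / Complex.cosh u ^ 2‖ ≤ 1 + ‖Complex.tanh u‖ ^ 2 := by
  rw [one_div_cosh_sq h]
  calc ‖1 - Complex.tanh u ^ 2‖
      ≤ ‖(1:ℂ)‖ + ‖Complex.tanh u ^ 2‖ := norm_sub_le _ _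
    _ = 1 + ‖Complex.tanh u‖ ^ 2 := by rw [norm_one, norm_pow]

lemma sinh_ne_zero_of_cosh_eq_zero {p : ℂ} (hp : Complex.cosh p = 0) : Complex.sinh p ≠ 0 := by
  intro h
  have := Complex.cosh_sq_sub_sinh_sq p
  rw [hp, h] at this
  simp at this

lemma tanh_pole_shift {p : ℂ} (hp : Complex.cosh p = 0) {h : ℂ} (hh : Complex.sinh h ≠ 0) :
    Complex.tanh (p + h) = Complex.cosh h / Complex.sinh h := by
  have hsp := sinh_ne_zero_of_cosh_eq_zero hp
  rw [Complex.tanh_eq_sinh_div_cosh, Complex.sinh_add, Complex.cosh_add, hp]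
  rw [zero_mul, add_zero, zero_mul, zero_add]
  rw [mul_div_mul_left _ _ hsp]

lemma abs_tanh_pole {p : ℂ} (hp : Complex.cosh p = 0) {ε : ℝ} (hε : 0 < ε) :
    1 / (2*ε) ≤ ‖Complex.tanh (p + (ε:ℂ))‖ := by
  have hsR : 0 < Real.sinh ε := Real.sinh_pos_iff.mpr hε
  have hsC : Complex.sinh (ε:ℂ) ≠ 0 := by
    rw [← Complex.ofReal_sinh]
    exact Complex.ofReal_ne_zero.mpr (ne_of_gt hsR)
  rw [tanh_pole_shift hp hsC, ← Complex.ofReal_cosh, ← Complex.ofReal_sinh, ← Complex.ofReal_div,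
    Complex.norm_real, Real.norm_eq_abs]
  have hcR : 0 < Real.cosh ε := Real.cosh_pos ε
  rw [abs_of_pos (by positivity)]
  rw [div_le_div_iff₀ (by positivity) hsR]
  -- 1 * sinh ε ≤ 2 ε cosh ε
  have h1 : 1 - 2*ε ≤ Real.exp (-(2*ε)) := by
    have := Real.add_one_le_exp (-(2*ε)); linarith
  have h2 : Real.exp (-(2*ε)) * Real.exp ε = Real.exp (-ε) := by
    rw [← Real.exp_add]; ring_nf
  have h3 := Real.exp_pos ε
  have h4 := Real.exp_pos (-ε)
  rw [Real.sinh_eq, Real.cosh_eq]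
  nlinarith [mul_le_mul_of_nonneg_right h1 (le_of_lt h3)]

lemma exp2_ub : Real.exp 2 ≤ 7.39 := by
  have h := exp_one_ub
  have h2 : Real.exp (2:ℝ) = Real.exp 1 ^ 2 := by
    have := exp_nat_eq 2; norm_num at this; convert this using 2; norm_num
  rw [h2]; nlinarith [Real.exp_pos (1:ℝ)]

lemma expm1_ub : Real.exp (-1:ℝ) ≤ 0.368 := by
  rw [Real.exp_neg]
  have h1 : (Real.exp (1:ℝ))⁻¹ ≤ (2.7182818283:ℝ)⁻¹ :=
    inv_anti₀ (by norm_num) exp_one_lb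
  calc (Real.exp (1:ℝ))⁻¹ ≤ (2.7182818283:ℝ)⁻¹ := h1
    _ ≤ 0.368 := by norm_num

lemma exp3_lb : (20 : ℝ) ≤ Real.exp 3 := by
  have h := exp_one_lb
  have h2 : Real.exp (3:ℝ) = Real.exp 1 ^ 3 := by
    have := exp_nat_eq 3; norm_num at this; convert this using 2; norm_num
  rw [h2]
  have h3 : (2.7182818283:ℝ)^2 ≤ Real.exp 1 ^ 2 := by nlinarith
  nlinarith

lemma expm3_ub : Real.exp (-3:ℝ) ≤ 0.05 := by
  rw [Real.exp_neg]
  have h1 : (Real.exp (3:ℝ))⁻¹ ≤ (20:ℝ)⁻¹ := inv_anti₀ (by norm_num) exp3_lb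
  calc (Real.exp (3:ℝ))⁻¹ ≤ (20:ℝ)⁻¹ := h1
    _ ≤ 0.05 := by norm_num

lemma exp_quarter_ub : Real.exp (1/4 : ℝ) ≤ 1.3 := by
  have h4 : Real.exp (1/4:ℝ) ^ 4 = Real.exp 1 := by
    rw [← Real.exp_nat_mul]; norm_num
  have hub := exp_one_ub
  have hpos := Real.exp_pos (1/4:ℝ)
  nlinarith [sq_nonneg (Real.exp (1/4:ℝ) - 1.3), sq_nonneg (Real.exp (1/4:ℝ) + 1.3),
    sq_nonneg (Real.exp (1/4:ℝ)^2 - 1.69)]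
set_option maxHeartbeats 2000000 in
theorem fn_spherical_deriv_bounded :
    ∃ C : ℝ, ∀ n : ℕ, 1 ≤ n → ∀ z : ℂ,
      ‖deriv (fun w => ∏ k ∈ Finset.Icc (-(n : ℤ)) (n : ℤ),
          Complex.tanh (w + 2 * k)) z‖ /
        (1 + ‖∏ k ∈ Finset.Icc (-(n : ℤ)) (n : ℤ),
          Complex.tanh (z + 2 * k)‖ ^ 2) ≤ C := by
  classical
  refine ⟨1000, fun n hn z => ?_⟩
  set s : Finset ℤ := Finset.Icc (-(n:ℤ)) (n:ℤ) with hs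
  have hre : ∀ k : ℤ, (z + 2 * (k:ℂ)).re = z.re + 2 * (k:ℝ) := by
    intro k
    simp [Complex.add_re, Complex.mul_re]
  set x : ℤ → ℝ := fun k => z.re + 2*(k:ℝ) with hxdef
  set q : ℤ → ℝ := fun k => 1 / Real.sinh (x k) ^ 2 with hqdef
  have hq0 : ∀ k, 0 ≤ q k := fun k => by rw [hqdef]; positivity
  set k₀ : ℤ := round (-z.re / 2) with hk0def
  have hnear : |x k₀| ≤ 1 := by
    have h1 := abs_sub_round (-z.re / 2)
    have h2 : x k₀ = -2 * (-z.re / 2 - (k₀:ℝ)) := by rw [hxdef]; push_cast; ring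
    calc |x k₀| = 2 * |(-z.re / 2 - (k₀:ℝ))| := by rw [h2, abs_mul]; norm_num
      _ ≤ 2 * (1/2) := by linarith
      _ = 1 := by norm_num
  have hfar : ∀ k : ℤ, 2*(((k - k₀).natAbs : ℕ):ℝ) - |x k₀| ≤ |x k| := by
    intro k
    have h2 : (((k - k₀).natAbs : ℕ):ℝ) = |(k:ℝ) - (k₀:ℝ)| := by
      rw [Nat.cast_natAbs]
      push_cast
      ring_nf
    have h3 : |x k - x k₀| = 2 * |(k:ℝ) - (k₀:ℝ)| := by
      have : x k - x k₀ = 2 * ((k:ℝ) - (k₀:ℝ)) := by rw [hxdef]; ring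
      rw [this, abs_mul]; norm_num
    have h4 : |x k - x k₀| ≤ |x k| + |x k₀| := by
      rw [sub_eq_add_neg]
      exact (abs_add_le _ _).trans (by rw [abs_neg])
    rw [h2]
    linarith
  -- per-factor upper bound
  have htanh_ub : ∀ k : ℤ, x k ≠ 0 →
      ‖Complex.tanh (z + 2*(k:ℂ))‖ ≤ Real.exp (q k / 2) := by
    intro k hk
    have hre' : (z + 2*(k:ℂ)).re = x k := hre k
    have h1 : ‖Complex.tanh (z + 2*(k:ℂ))‖ ^ 2 ≤ 1 + q k := by
      have h := sq_abs_tanh_le (u := z + 2*(k:ℂ)) (by rw [hre']; exact hk)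
      rw [hre'] at h
      exact h
    have h2 : 1 + q k ≤ Real.exp (q k) := by linarith [Real.add_one_le_exp (q k)]
    have h3 : Real.exp (q k) = Real.exp (q k / 2) ^ 2 := by
      rw [sq, ← Real.exp_add]; ring_nf
    nlinarith [norm_nonneg (Complex.tanh (z + 2*(k:ℂ))), Real.exp_pos (q k / 2)]
  have hprod_ub : ∀ t : Finset ℤ, (∀ k ∈ t, x k ≠ 0) →
      (∏ k ∈ t, ‖Complex.tanh (z + 2*(k:ℂ))‖) ≤ Real.exp ((∑ k ∈ t, q k) / 2) := by
    intro t hne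
    calc (∏ k ∈ t, ‖Complex.tanh (z + 2*(k:ℂ))‖)
        ≤ ∏ k ∈ t, Real.exp (q k / 2) :=
          Finset.prod_le_prod (fun k _ => norm_nonneg _) (fun k hk => htanh_ub k (hne k hk))
      _ = Real.exp (∑ k ∈ t, q k / 2) := (Real.exp_sum t _).symm
      _ = Real.exp ((∑ k ∈ t, q k) / 2) := by rw [Finset.sum_div]
  have hden_pos : (0:ℝ) < 1 + ‖∏ k ∈ s, Complex.tanh (z + 2*(k:ℂ))‖ ^ 2 := by
    positivity
  by_cases hB : k₀ ∈ s ∧ |x k₀| < 1/2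
  · -- CASE B
    obtain ⟨hk0s, hx0⟩ := hB
    set t := s.erase k₀ with htdef
    have hxB : ∀ j ∈ t, 3/2 ≤ |x j| := by
      intro j hj
      have hjne : j ≠ k₀ := Finset.ne_of_mem_erase hj
      have h1 : 1 ≤ ((j - k₀).natAbs : ℝ) := by
        have h0 : 1 ≤ (j - k₀).natAbs := by omega
        exact_mod_cast h0
      have := hfar j
      linarith
    have hxBne : ∀ j ∈ t, x j ≠ 0 := by
      intro j hj h0
      have := hxB j hj
      rw [h0] at this
      simp at this
      linarith
    have hSB : ∑ j ∈ t, q j ≤ 0.46 := by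
      have h := sum_inv_sinh_decay t k₀ (Finset.notMem_erase _ _) x (3/2) (1/2)
        (by norm_num) hxB (fun j hj => by have := hfar j; linarith)
      have heq : ∑ j ∈ t, q j = ∑ j ∈ t, 1 / Real.sinh (x j) ^ 2 := rfl
      rw [heq]
      refine h.trans ?_
      have hA3 : 4 / (1 - Real.exp (-(2*(3/2:ℝ)))) ^ 2 ≤ 4.44 := by
        have h1 : Real.exp (-(2*(3/2:ℝ))) = Real.exp (-3:ℝ) := by norm_num
        rw [h1]
        have h2 := expm3_ub
        have h3 : (0:ℝ) < Real.exp (-3:ℝ) := Real.exp_pos _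
        rw [div_le_iff₀ (by nlinarith)]
        nlinarith
      have h2 : Real.exp (2*(1/2:ℝ)) = Real.exp 1 := by norm_num
      rw [h2]
      have h3 := exp_one_ub
      have h4 := ratio4_ub
      have h5 : (0:ℝ) < Real.exp (-4:ℝ) := Real.exp_pos _
      have h6 : Real.exp (-4:ℝ) < 1 := Real.exp_lt_one_iff.mpr (by norm_num)
      have h7 : (0:ℝ) ≤ Real.exp (-4:ℝ) / (1 - Real.exp (-4:ℝ)) := by
        apply div_nonneg (le_of_lt h5); linarith
      have h8 : (0:ℝ) < Real.exp 1 := Real.exp_pos _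
      calc 4 / (1 - Real.exp (-(2*(3/2:ℝ)))) ^ 2 * Real.exp 1
            * (2 * (Real.exp (-4:ℝ) / (1 - Real.exp (-4:ℝ))))
          ≤ 4.44 * 2.7182818286 * (2 * 0.019) := by
            apply mul_le_mul
            · exact mul_le_mul hA3 h3 (le_of_lt h8) (by norm_num)
            · linarith
            · linarith
            · norm_num
        _ ≤ 0.46 := by norm_num
    have hqB : ∀ j ∈ t, q j ≤ 0.23 := by
      intro j hj
      have h1 : q j = 1 / Real.sinh |x j| ^ 2 := by
        rw [hqdef]; simp only []; rw [sinh_sq_abs]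
      have h2 := inv_sinh_sq_le (y₀ := 3/2) (y := |x j|) (by norm_num) (hxB j hj)
      have hA3 : 4 / (1 - Real.exp (-(2*(3/2:ℝ)))) ^ 2 ≤ 4.44 := by
        have h1' : Real.exp (-(2*(3/2:ℝ))) = Real.exp (-3:ℝ) := by norm_num
        rw [h1']
        have h2' := expm3_ub
        have h3' : (0:ℝ) < Real.exp (-3:ℝ) := Real.exp_pos _
        rw [div_le_iff₀ (by nlinarith)]
        nlinarith
      have h3 : Real.exp (-(2*|x j|)) ≤ Real.exp (-3:ℝ) :=
        Real.exp_le_exp.mpr (by linarith [hxB j hj])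
      have h4 := expm3_ub
      rw [h1]
      calc 1 / Real.sinh |x j| ^ 2
          ≤ 4 / (1 - Real.exp (-(2*(3/2:ℝ)))) ^ 2 * Real.exp (-(2*|x j|)) := h2
        _ ≤ 4.44 * Real.exp (-3:ℝ) := by
            apply mul_le_mul hA3 h3 (le_of_lt (Real.exp_pos _)) (by norm_num)
        _ ≤ 0.23 := by nlinarith
    set P := ∏ j ∈ t, ‖Complex.tanh (z + 2*(j:ℂ))‖ with hPdef
    have hPnn : 0 ≤ P := Finset.prod_nonneg (fun j _ => norm_nonneg _)
    have hP_ub : P ≤ 1.3 := by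
      refine (hprod_ub t hxBne).trans ?_
      calc Real.exp ((∑ j ∈ t, q j)/2) ≤ Real.exp (1/4 : ℝ) :=
            Real.exp_le_exp.mpr (by linarith)
        _ ≤ 1.3 := exp_quarter_ub
    have hP_lb : 0.7 ≤ P := by
      have h1 : ∀ j ∈ t, 1 - q j ≤ ‖Complex.tanh (z + 2*(j:ℂ))‖ ^ 2 := by
        intro j hj
        have h := le_sq_abs_tanh (u := z + 2*(j:ℂ)) (by rw [hre]; exact hxBne j hj)
        rw [hre] at h
        exact h
      have h2 : ∏ j ∈ t, (1 - q j) ≤ ∏ j ∈ t, ‖Complex.tanh (z + 2*(j:ℂ))‖ ^ 2 :=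
        Finset.prod_le_prod (fun j hj => by linarith [hqB j hj]) h1
      have h3 : 1 - ∑ j ∈ t, q j ≤ ∏ j ∈ t, (1 - q j) :=
        one_sub_sum_le_prod t q (fun j _ => hq0 j) (fun j hj => by linarith [hqB j hj])
      have h4 : ∏ j ∈ t, ‖Complex.tanh (z + 2*(j:ℂ))‖ ^ 2 = P ^ 2 := by
        rw [hPdef, ← Finset.prod_pow]
      have h5 : (0.54:ℝ) ≤ P ^ 2 := by
        rw [← h4]
        calc (0.54:ℝ) ≤ 1 - ∑ j ∈ t, q j := by linarith
          _ ≤ ∏ j ∈ t, (1 - q j) := h3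
          _ ≤ _ := h2
      nlinarith
    have hcoshB : ∀ j ∈ t, Complex.cosh (z + 2*(j:ℂ)) ≠ 0 := fun j hj =>
      cosh_ne_zero_of_re (by rw [hre]; exact hxBne j hj)
    have hdersB : ∀ j ∈ t, HasDerivAt (fun w => Complex.tanh (w + 2*(j:ℂ)))
        (1 / Complex.cosh (z + 2*(j:ℂ)) ^ 2) z :=
      fun j hj => hasDerivAt_tanh_shift _ z (hcoshB j hj)
    set G := ∑ i ∈ t, (∏ j ∈ t.erase i, Complex.tanh (z + 2*(j:ℂ))) •
        (1 / Complex.cosh (z + 2*(i:ℂ)) ^ 2) with hGdef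
    have hg : HasDerivAt (fun w => ∏ j ∈ t, Complex.tanh (w + 2*(j:ℂ))) G z := by
      have h := HasDerivAt.finset_prod hdersB; rw [Finset.prod_fn] at h; exact h
    have hGbound : ‖G‖ ≤ 0.6 := by
      rw [hGdef]
      calc ‖∑ i ∈ t, (∏ j ∈ t.erase i, Complex.tanh (z + 2*(j:ℂ))) •
              (1 / Complex.cosh (z + 2*(i:ℂ)) ^ 2)‖
          ≤ ∑ i ∈ t, ‖(∏ j ∈ t.erase i, Complex.tanh (z + 2*(j:ℂ))) •
              (1 / Complex.cosh (z + 2*(i:ℂ)) ^ 2)‖ := norm_sum_le _ _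
        _ ≤ ∑ i ∈ t, 1.3 * q i := by
            apply Finset.sum_le_sum
            intro i hi
            rw [smul_eq_mul, norm_mul]
            have hP2 : ‖∏ j ∈ t.erase i, Complex.tanh (z + 2*(j:ℂ))‖ ≤ 1.3 := by
              rw [norm_prod]
              refine (hprod_ub _ (fun j hj => hxBne j (Finset.mem_of_mem_erase hj))).trans ?_
              have hsub : ∑ j ∈ t.erase i, q j ≤ ∑ j ∈ t, q j :=
                Finset.sum_le_sum_of_subset_of_nonneg (Finset.erase_subset _ _)
                  (fun j _ _ => hq0 j)
              calc Real.exp ((∑ j ∈ t.erase i, q j)/2) ≤ Real.exp (1/4:ℝ) :=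
                    Real.exp_le_exp.mpr (by linarith)
                _ ≤ 1.3 := exp_quarter_ub
            have hQ : ‖1 / Complex.cosh (z + 2*(i:ℂ)) ^ 2‖ ≤ q i := by
              have h := abs_sech_sq_le (u := z + 2*(i:ℂ)) (by rw [hre]; exact hxBne i hi)
              rw [hre] at h
              exact h
            exact mul_le_mul hP2 hQ (norm_nonneg _) (by norm_num)
        _ = 1.3 * ∑ i ∈ t, q i := by rw [← Finset.mul_sum]
        _ ≤ 0.6 := by nlinarith [hSB, Finset.sum_nonneg (fun j (_ : j ∈ t) => hq0 j)]
    set a := ‖Complex.tanh (z + 2*(k₀:ℂ))‖ with hadef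
    have ha0 : 0 ≤ a := norm_nonneg _
    have habsprod : ‖∏ j ∈ t, Complex.tanh (z + 2*(j:ℂ))‖ = P := by
      rw [hPdef, norm_prod]
    have hFsplit : (∏ k ∈ s, Complex.tanh (z + 2*(k:ℂ)))
        = Complex.tanh (z + 2*(k₀:ℂ)) * ∏ j ∈ t, Complex.tanh (z + 2*(j:ℂ)) :=
      (Finset.mul_prod_erase s _ hk0s).symm
    have habsF : ‖∏ k ∈ s, Complex.tanh (z + 2*(k:ℂ))‖ = a * P := by
      rw [hFsplit, norm_mul, habsprod]
    by_cases hcosh0 : Complex.cosh (z + 2*(k₀:ℂ)) = 0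
    · -- B-i : not differentiable at z
      have hgz_ne : (∏ j ∈ t, Complex.tanh (z + 2*(j:ℂ))) ≠ 0 :=
        Finset.prod_ne_zero_iff.mpr
          (fun j hj => tanh_ne_zero_of_re (by rw [hre]; exact hxBne j hj))
      have hnd : ¬ DifferentiableAt ℂ (fun w => ∏ k ∈ s, Complex.tanh (w + 2*(k:ℂ))) z := by
        intro hd
        have hgc : ContinuousAt (fun w => ∏ j ∈ t, Complex.tanh (w + 2*(j:ℂ))) z :=
          hg.differentiableAt.continuousAt
        have hev : ∀ᶠ w in nhds z, (∏ j ∈ t, Complex.tanh (w + 2*(j:ℂ))) ≠ 0 :=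
          hgc.eventually_ne hgz_ne
        have hTc : ContinuousAt (fun w => Complex.tanh (w + 2*(k₀:ℂ))) z := by
          have hdivc : ContinuousAt (fun w => (∏ k ∈ s, Complex.tanh (w + 2*(k:ℂ)))
              / (∏ j ∈ t, Complex.tanh (w + 2*(j:ℂ)))) z :=
            hd.continuousAt.div hgc hgz_ne
          apply hdivc.congr
          filter_upwards [hev] with w hw
          have hsplit : (∏ k ∈ s, Complex.tanh (w + 2*(k:ℂ)))
              = Complex.tanh (w + 2*(k₀:ℂ)) * ∏ j ∈ t, Complex.tanh (w + 2*(j:ℂ)) :=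
            (Finset.mul_prod_erase s _ hk0s).symm
          rw [hsplit, mul_div_assoc, div_self hw, mul_one]
        obtain ⟨δ, hδpos, hδ⟩ := Metric.continuousAt_iff.mp hTc 1 one_pos
        set M := ‖Complex.tanh (z + 2*(k₀:ℂ))‖ + 1 with hM
        have hM1 : (0:ℝ) < M := by
          have := norm_nonneg (Complex.tanh (z + 2*(k₀:ℂ)))
          rw [hM]; linarith
        set ε := min (δ/2) (1/(2*(M+1))) with hε
        have hεpos : 0 < ε := lt_min (by linarith) (one_div_pos.mpr (by linarith))
        have hεδ : dist (z + (ε:ℂ)) z < δ := by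
          rw [Complex.dist_eq, add_sub_cancel_left, Complex.norm_real, Real.norm_eq_abs, abs_of_pos hεpos]
          calc ε ≤ δ/2 := min_le_left _ _
            _ < δ := by linarith
        have h1 := hδ hεδ
        have h2 : ‖Complex.tanh ((z + (ε:ℂ)) + 2*(k₀:ℂ))‖ < M := by
          rw [Complex.dist_eq] at h1
          have h2a := norm_sub_norm_le (Complex.tanh ((z + (ε:ℂ)) + 2*(k₀:ℂ)))
            (Complex.tanh (z + 2*(k₀:ℂ)))
          rw [hM]
          linarith
        have heqpt : (z + (ε:ℂ)) + 2*(k₀:ℂ) = (z + 2*(k₀:ℂ)) + (ε:ℂ) := by ring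
        have h3 : 1/(2*ε) ≤ ‖Complex.tanh ((z + (ε:ℂ)) + 2*(k₀:ℂ))‖ := by
          rw [heqpt]
          exact abs_tanh_pole hcosh0 hεpos
        have h4 : M + 1 ≤ 1/(2*ε) := by
          rw [le_div_iff₀ (by linarith : (0:ℝ) < 2*ε)]
          have hmr : ε ≤ 1/(2*(M+1)) := min_le_right _ _
          have hM2 : (0:ℝ) < 2*(M+1) := by linarith
          have : ε * (2*(M+1)) ≤ 1/(2*(M+1)) * (2*(M+1)) :=
            mul_le_mul_of_nonneg_right hmr (le_of_lt hM2)
          rw [one_div_mul_cancel (ne_of_gt hM2)] at this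
          nlinarith
        linarith
      rw [deriv_zero_of_not_differentiableAt hnd, norm_zero, zero_div]
      norm_num
    · -- B-ii : differentiable, pole-free at k₀
      have hT' := hasDerivAt_tanh_shift (2*(k₀:ℂ)) z hcosh0
      have hprodder := hT'.mul hg
      have hFeq : ((fun w => Complex.tanh (w + 2*(k₀:ℂ))) *
            (fun w => ∏ j ∈ t, Complex.tanh (w + 2*(j:ℂ))))
          = (fun w => ∏ k ∈ s, Complex.tanh (w + 2*(k:ℂ))) := by
        funext w
        exact Finset.mul_prod_erase s (fun k => Complex.tanh (w + 2*(k:ℂ))) hk0s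
      rw [hFeq] at hprodder
      rw [hprodder.deriv, habsF]
      have hnum : ‖1 / Complex.cosh (z + 2*(k₀:ℂ)) ^ 2 *
            (∏ j ∈ t, Complex.tanh (z + 2*(j:ℂ))) + Complex.tanh (z + 2*(k₀:ℂ)) * G‖
          ≤ (1 + a^2) * P + a * 0.6 := by
        calc ‖1 / Complex.cosh (z + 2*(k₀:ℂ)) ^ 2 *
              (∏ j ∈ t, Complex.tanh (z + 2*(j:ℂ))) + Complex.tanh (z + 2*(k₀:ℂ)) * G‖
            ≤ ‖1 / Complex.cosh (z + 2*(k₀:ℂ)) ^ 2 *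
              (∏ j ∈ t, Complex.tanh (z + 2*(j:ℂ)))‖
              + ‖Complex.tanh (z + 2*(k₀:ℂ)) * G‖ := norm_add_le _ _
          _ ≤ (1 + a^2) * P + a * 0.6 := by
              rw [norm_mul, norm_mul, habsprod]
              have hc1 : ‖1 / Complex.cosh (z + 2*(k₀:ℂ)) ^ 2‖ ≤ 1 + a^2 := by
                have := abs_one_div_cosh_sq_le hcosh0
                rw [← hadef] at this
                exact this
              have := mul_le_mul hc1 (le_refl P) hPnn (by nlinarith [sq_nonneg a])
              have h2 := mul_le_mul (le_refl a) hGbound (norm_nonneg _) ha0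
              nlinarith [norm_nonneg G]
      have hden2 : (0:ℝ) < 1 + (a*P)^2 := by nlinarith [sq_nonneg (a*P)]
      calc ‖1 / Complex.cosh (z + 2*(k₀:ℂ)) ^ 2 *
              (∏ j ∈ t, Complex.tanh (z + 2*(j:ℂ))) + Complex.tanh (z + 2*(k₀:ℂ)) * G‖
              / (1 + (a*P)^2)
          ≤ ((1 + a^2) * P + a * 0.6) / (1 + (a*P)^2) := by
            apply div_le_div_of_nonneg_right hnum hden2.le
        _ ≤ 1000 := by
            rw [div_le_iff₀ hden2]
            have hP2 : (0.49:ℝ) ≤ P^2 := by nlinarith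
            have e1 : 0.49*a^2 ≤ (a*P)^2 := by
              have := mul_le_mul_of_nonneg_left hP2 (sq_nonneg a)
              nlinarith
            have e2 : a^2*P ≤ 1.3*a^2 := by
              have := mul_le_mul_of_nonneg_left hP_ub (sq_nonneg a)
              nlinarith
            have e3 : a*(0.6:ℝ) ≤ 0.3 + 0.3*a^2 := by nlinarith [sq_nonneg (a-1)]
            nlinarith [e1, e2, e3]
  · -- CASE A
    have hxA : ∀ k ∈ s, 1/2 ≤ |x k| := by
      intro k hk
      by_cases hkk : k = k₀
      · subst hkk
        rcases not_and_or.mp hB with h | h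
        · exact absurd hk h
        · linarith [not_lt.mp h]
      · have h1 : 1 ≤ ((k - k₀).natAbs : ℝ) := by
          have : k - k₀ ≠ 0 := sub_ne_zero.mpr hkk
          have : 1 ≤ (k - k₀).natAbs := by omega
          exact_mod_cast this
        have := hfar k
        linarith [hnear]
    have hxne : ∀ k ∈ s, x k ≠ 0 := by
      intro k hk
      have := hxA k hk
      intro h0
      rw [h0] at this
      simp at this
      linarith
    have hcosh : ∀ k ∈ s, Complex.cosh (z + 2*(k:ℂ)) ≠ 0 := by
      intro k hk
      exact cosh_ne_zero_of_re (by rw [hre]; exact hxne k hk)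
    have hders : ∀ k ∈ s, HasDerivAt (fun w => Complex.tanh (w + 2*(k:ℂ)))
        (1 / Complex.cosh (z + 2*(k:ℂ)) ^ 2) z :=
      fun k hk => hasDerivAt_tanh_shift _ z (hcosh k hk)
    have hD := HasDerivAt.finset_prod hders
    rw [Finset.prod_fn] at hD
    rw [hD.deriv]
    -- bound S
    set S := ∑ k ∈ s, q k with hSdef
    have hS0 : 0 ≤ S := Finset.sum_nonneg (fun k _ => hq0 k)
    have hSbound : S ≤ 7 := by
      have hA : 4 / (1 - Real.exp (-(2*(1/2:ℝ)))) ^ 2 ≤ 10.02 := by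
        have h1 : Real.exp (-(2*(1/2:ℝ))) = Real.exp (-1:ℝ) := by norm_num
        rw [h1]
        have h2 := expm1_ub
        have h3 : (0:ℝ) < Real.exp (-1:ℝ) := Real.exp_pos _
        rw [div_le_iff₀ (by nlinarith)]
        nlinarith
      have hq_k0 : ∀ hk0s : k₀ ∈ s, q k₀ ≤ 3.72 := by
        intro hk0s
        have h1 : q k₀ = 1 / Real.sinh |x k₀| ^ 2 := by rw [hqdef]; simp only []; rw [sinh_sq_abs]
        have h2 := inv_sinh_sq_le (y₀ := 1/2) (y := |x k₀|) (by norm_num) (hxA k₀ hk0s)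
        have h3 : Real.exp (-(2*|x k₀|)) ≤ Real.exp (-1:ℝ) :=
          Real.exp_le_exp.mpr (by linarith [hxA k₀ hk0s])
        have h4 := expm1_ub
        have h5 : (0:ℝ) ≤ 4 / (1 - Real.exp (-(2*(1/2:ℝ)))) ^ 2 := by
          have : Real.exp (-(2*(1/2:ℝ))) < 1 := Real.exp_lt_one_iff.mpr (by norm_num)
          positivity
        rw [h1]
        calc 1 / Real.sinh |x k₀| ^ 2
            ≤ 4 / (1 - Real.exp (-(2*(1/2:ℝ)))) ^ 2 * Real.exp (-(2*|x k₀|)) := h2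
          _ ≤ 10.02 * Real.exp (-1:ℝ) := by
              apply mul_le_mul hA h3 (le_of_lt (Real.exp_pos _)) (by norm_num)
          _ ≤ 3.72 := by nlinarith
      have herase : ∑ j ∈ s.erase k₀, q j ≤ 2.82 := by
        have h := sum_inv_sinh_decay (s.erase k₀) k₀ (Finset.notMem_erase _ _) x (1/2) 1
          (by norm_num)
          (fun j hj => hxA j (Finset.mem_of_mem_erase hj))
          (fun j hj => by have := hfar j; linarith [hnear])
        have heq : ∑ j ∈ s.erase k₀, q j = ∑ j ∈ s.erase k₀, 1 / Real.sinh (x j) ^ 2 := rfl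
        rw [heq]
        refine h.trans ?_
        have h2 := exp2_ub
        have h3 := ratio4_ub
        have h4 : (0:ℝ) < Real.exp 2 := Real.exp_pos _
        have h5 : (0:ℝ) < Real.exp (-4:ℝ) := Real.exp_pos _
        have h6 : Real.exp (-4:ℝ) < 1 := Real.exp_lt_one_iff.mpr (by norm_num)
        have h7 : (0:ℝ) ≤ Real.exp (-4:ℝ) / (1 - Real.exp (-4:ℝ)) := by
          apply div_nonneg (le_of_lt h5); linarith
        have h8 : Real.exp (2*(1:ℝ)) = Real.exp 2 := by norm_num
        rw [h8]
        have h9 : (0:ℝ) ≤ 4 / (1 - Real.exp (-(2*(1/2:ℝ)))) ^ 2 := by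
          have : Real.exp (-(2*(1/2:ℝ))) < 1 := Real.exp_lt_one_iff.mpr (by norm_num)
          positivity
        calc 4 / (1 - Real.exp (-(2*(1/2:ℝ)))) ^ 2 * Real.exp 2
              * (2 * (Real.exp (-4:ℝ) / (1 - Real.exp (-4:ℝ))))
            ≤ 10.02 * 7.39 * (2 * 0.019) := by
              apply mul_le_mul
              · exact mul_le_mul hA h2 (le_of_lt h4) (by norm_num)
              · linarith
              · linarith
              · norm_num
          _ ≤ 2.82 := by norm_num
      by_cases hk0s : k₀ ∈ s
      · rw [hSdef, ← Finset.add_sum_erase s q hk0s]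
        have := hq_k0 hk0s
        linarith
      · rw [hSdef, ← Finset.erase_eq_of_notMem hk0s]
        linarith
    -- bound the derivative
    have habsD : ‖∑ k ∈ s, (∏ j ∈ s.erase k, Complex.tanh (z + 2*(j:ℂ))) •
          (1 / Complex.cosh (z + 2*(k:ℂ)) ^ 2)‖ ≤ Real.exp (S/2) * S := by
      calc ‖∑ k ∈ s, (∏ j ∈ s.erase k, Complex.tanh (z + 2*(j:ℂ))) •
              (1 / Complex.cosh (z + 2*(k:ℂ)) ^ 2)‖
          ≤ ∑ k ∈ s, ‖(∏ j ∈ s.erase k, Complex.tanh (z + 2*(j:ℂ))) •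
              (1 / Complex.cosh (z + 2*(k:ℂ)) ^ 2)‖ := norm_sum_le _ _
        _ ≤ ∑ k ∈ s, Real.exp (S/2) * q k := by
            apply Finset.sum_le_sum
            intro k hk
            rw [smul_eq_mul, norm_mul]
            have hP : ‖∏ j ∈ s.erase k, Complex.tanh (z + 2*(j:ℂ))‖
                ≤ Real.exp (S/2) := by
              rw [norm_prod]
              refine (hprod_ub _ (fun j hj => hxne j (Finset.mem_of_mem_erase hj))).trans ?_
              apply Real.exp_le_exp.mpr
              have hsub : ∑ j ∈ s.erase k, q j ≤ S :=
                Finset.sum_le_sum_of_subset_of_nonneg (Finset.erase_subset _ _)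
                  (fun j _ _ => hq0 j)
              linarith
            have hQ : ‖1 / Complex.cosh (z + 2*(k:ℂ)) ^ 2‖ ≤ q k := by
              have := abs_sech_sq_le (u := z + 2*(k:ℂ)) (by rw [hre]; exact hxne k hk)
              rw [hre] at this
              exact this
            exact mul_le_mul hP hQ (norm_nonneg _) (le_of_lt (Real.exp_pos _))
        _ = Real.exp (S/2) * S := by rw [← Finset.mul_sum]
    have hexpS : Real.exp (S/2) ≤ 55 := by
      calc Real.exp (S/2) ≤ Real.exp 4 := Real.exp_le_exp.mpr (by linarith)
        _ ≤ 55 := exp4_ub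
    have hfin : ‖∑ k ∈ s, (∏ j ∈ s.erase k, Complex.tanh (z + 2*(j:ℂ))) •
          (1 / Complex.cosh (z + 2*(k:ℂ)) ^ 2)‖ ≤ 385 := by
      calc _ ≤ Real.exp (S/2) * S := habsD
        _ ≤ 55 * 7 := by
            apply mul_le_mul hexpS hSbound hS0 (by norm_num)
        _ = 385 := by norm_num
    calc _ ≤ ‖∑ k ∈ s, (∏ j ∈ s.erase k, Complex.tanh (z + 2*(j:ℂ))) •
          (1 / Complex.cosh (z + 2*(k:ℂ)) ^ 2)‖ := by
          apply div_le_self (norm_nonneg _)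
          nlinarith [norm_nonneg (∏ k ∈ s, Complex.tanh (z + 2*(k:ℂ))),
            sq_nonneg (‖∏ k ∈ s, Complex.tanh (z + 2*(k:ℂ))‖)]
      _ ≤ 385 := hfin
      _ ≤ 1000 := by norm_num
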